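/- arXiv:1312.2262 — 4 statements merged into one kernel-verified Lean document; each statement's English description precedes it below -/
import Mathlib

section
/- For an n×n complex matrix A, the characteristic polynomial of A·conj(A) has real coefficients; equivalently, if λ is an eigenvalue of A·conj(A), then so is its complex conjugate λ̄ (with the same algebraic multiplicity). -/
open Matrix Polynomial

/-- Entrywise complex conjugate of a matrix. -/
def conjM {n : ℕ} (A : Matrix (Fin n) (Fin n) ℂ) : Matrix (Fin n) (Fin n) ℂ :=
  A.map (starRingEnd ℂ)

lemma reflect_reflect' {R : Type*} [Semiring R] (N : ℕ) (p : R[X]) :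
    (p.reflect N).reflect N = p := by
  ext i
  simp [Polynomial.coeff_reflect]

lemma charpolyRev_mul_comm {m : ℕ} (A B : Matrix (Fin m) (Fin m) ℂ) :
    (A * B).charpolyRev = (B * A).charpolyRev := by
  unfold Matrix.charpolyRev
  have h : ∀ (M N : Matrix (Fin m) (Fin m) ℂ),
      (X : ℂ[X]) • (M * N).map Polynomial.C
        = ((X : ℂ[X]) • M.map Polynomial.C) * N.map Polynomial.C := by
    intro M N
    rw [Matrix.map_mul (f := (Polynomial.C : ℂ →+* ℂ[X])), Matrix.smul_mul]
  rw [h, h, Matrix.det_one_sub_mul_comm, Matrix.mul_smul, Matrix.smul_mul]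

lemma charpoly_mul_comm' {m : ℕ} (A B : Matrix (Fin m) (Fin m) ℂ) :
    (A * B).charpoly = (B * A).charpoly := by
  have h1 : (A * B).charpoly.natDegree = m := by simp
  have h2 : (B * A).charpoly.natDegree = m := by simp
  have := charpolyRev_mul_comm A B
  rw [← Matrix.reverse_charpoly, ← Matrix.reverse_charpoly] at this
  unfold Polynomial.reverse at this
  rw [h1, h2] at this
  calc (A * B).charpoly = (((A * B).charpoly.reflect m).reflect m) :=
        (reflect_reflect' m _).symm
    _ = (((B * A).charpoly.reflect m).reflect m) := by rw [this]
    _ = (B * A).charpoly := reflect_reflect' m _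

lemma charpoly_conj_fixed {n : ℕ} (A : Matrix (Fin n) (Fin n) ℂ) :
    ((A * conjM A).charpoly).map (starRingEnd ℂ) = (A * conjM A).charpoly := by
  rw [← Matrix.charpoly_map]
  have : (A * conjM A).map (starRingEnd ℂ) = conjM A * A := by
    unfold conjM
    rw [Matrix.map_mul (f := (starRingEnd ℂ))]
    congr 1
    ext i j
    simp [Matrix.map_apply]
  rw [this, charpoly_mul_comm']

/-- The characteristic polynomial of `A ⬝ conj A` has real coefficients; equivalently,
eigenvalues come in conjugate pairs with equal algebraic multiplicities. -/
theorem charpoly_mul_conj_real_coeff (n : ℕ) (A : Matrix (Fin n) (Fin n) ℂ) :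
    (∀ k : ℕ, ((A * conjM A).charpoly.coeff k).im = 0) ∧
    (∀ lam : ℂ,
      (A * conjM A).charpoly.rootMultiplicity lam
        = (A * conjM A).charpoly.rootMultiplicity (starRingEnd ℂ lam)) := by
  have hfix := charpoly_conj_fixed A
  constructor
  · intro k
    have := congrArg (fun p => p.coeff k) hfix
    simp only [Polynomial.coeff_map] at this
    have him : (starRingEnd ℂ) ((A * conjM A).charpoly.coeff k)
        = (A * conjM A).charpoly.coeff k := this
    have := congrArg Complex.im him
    simpa [Complex.conj_im, neg_eq_iff_add_eq_zero] using this
  · intro lam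
    have := Polynomial.eq_rootMultiplicity_map
      (p := (A * conjM A).charpoly) (f := starRingEnd ℂ)
      (starRingEnd ℂ).injective lam
    rw [hfix] at this
    exact this
end

section
/- For any n×n complex matrices A, B with B symmetric and any invertible S and t ∈ [0,1] such that S_t is a continuous path in GL(n,ℂ) from I to S, the sign of det [[A_t, conj(B_t)],[B_t, conj(A_t)]] with (A_t,B_t) = (S_t* A S_t, S_tᵀ B S_t) is constant in t. In particular, G-congruent pairs (A,B) and (ζ P* A P, ζ̄ Pᵀ B P), with |ζ|=1 and P invertible, have determinants det [[A, conj(B)],[B, conj(A)]] of the same sign, so G-congruence preserves ellipticity and hyperbolicity. -/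
open Matrix

/-- The determinant of the block matrix `[[A, conj B],[B, conj A]]`. -/
noncomputable def pairDet {n : ℕ} (A B : Matrix (Fin n) (Fin n) ℂ) : ℂ :=
  (Matrix.fromBlocks A (conjM B) B (conjM A)).det


lemma conjM_mul {n : ℕ} (X Y : Matrix (Fin n) (Fin n) ℂ) :
    conjM (X * Y) = conjM X * conjM Y := by ext i j; simp [conjM, Matrix.mul_apply, map_sum]

lemma conjM_transpose {n : ℕ} (X : Matrix (Fin n) (Fin n) ℂ) : conjM (Xᵀ) = Xᴴ := rfl

lemma conjM_smul {n : ℕ} (c : ℂ) (X : Matrix (Fin n) (Fin n) ℂ) :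
    conjM (c • X) = (starRingEnd ℂ c) • conjM X := by
  ext i j; simp [conjM, Matrix.smul_apply, _root_.map_mul]

lemma pairDet_congr {n : ℕ} (A B S : Matrix (Fin n) (Fin n) ℂ) :
    pairDet (Sᴴ * A * S) (Sᵀ * B * S)
      = ((Complex.normSq S.det : ℂ))^2 * pairDet A B := by
  have hblock : Matrix.fromBlocks (Sᴴ * A * S) (conjM (Sᵀ * B * S)) (Sᵀ * B * S)
      (conjM (Sᴴ * A * S))
      = Matrix.fromBlocks Sᴴ 0 0 Sᵀ * Matrix.fromBlocks A (conjM B) B (conjM A)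
        * Matrix.fromBlocks S 0 0 (conjM S) := by
    rw [Matrix.fromBlocks_multiply, Matrix.fromBlocks_multiply]
    have h1 : conjM (Sᵀ * (B * S)) = Sᴴ * (conjM B * conjM S) := by
      rw [conjM_mul, conjM_mul, conjM_transpose]
    have h2 : conjM (Sᴴ * (A * S)) = Sᵀ * (conjM A * conjM S) := by
      rw [conjM_mul, conjM_mul]
      congr 1
      ext i j; simp [conjM, Matrix.conjTranspose_apply]
    simp [h1, h2, Matrix.mul_assoc]
  have hd : (conjM S).det = starRingEnd ℂ S.det := by
    rw [show conjM S = Sᴴᵀ by ext i j; simp [conjM, Matrix.conjTranspose_apply],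
      Matrix.det_transpose, Matrix.det_conjTranspose, starRingEnd_apply]
  unfold pairDet
  rw [hblock, Matrix.det_mul, Matrix.det_mul, Matrix.det_fromBlocks_zero₂₁,
    Matrix.det_fromBlocks_zero₂₁, Matrix.det_conjTranspose, Matrix.det_transpose, hd]
  have : (Complex.normSq S.det : ℂ) = S.det * starRingEnd ℂ S.det := by
    rw [Complex.normSq_eq_conj_mul_self]; ring
  simp only [this, starRingEnd_apply]; ring

lemma pairDet_smul {n : ℕ} (ζ : ℂ) (A B : Matrix (Fin n) (Fin n) ℂ) :
    pairDet (ζ • A) ((starRingEnd ℂ ζ) • B)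
      = ((Complex.normSq ζ : ℂ))^n * pairDet A B := by
  have hblock : Matrix.fromBlocks (ζ • A) (conjM ((starRingEnd ℂ ζ) • B))
      ((starRingEnd ℂ ζ) • B) (conjM (ζ • A))
      = Matrix.fromBlocks (ζ • (1 : Matrix (Fin n) (Fin n) ℂ)) 0 0
          ((starRingEnd ℂ ζ) • 1) * Matrix.fromBlocks A (conjM B) B (conjM A) := by
    rw [Matrix.fromBlocks_multiply]
    simp [conjM_smul, Matrix.smul_mul, Complex.conj_conj]
  unfold pairDet
  rw [hblock, Matrix.det_mul, Matrix.det_fromBlocks_zero₂₁, Matrix.det_smul, Matrix.det_smul]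
  have : (Complex.normSq ζ : ℂ) = ζ * starRingEnd ℂ ζ := by
    rw [Complex.normSq_eq_conj_mul_self]; ring
  simp only [this, Matrix.det_one, mul_pow, mul_one, starRingEnd_apply, Fintype.card_fin]

lemma sign_pos_mul (c x : ℝ) (hc : 0 < c) : Real.sign (c * x) = Real.sign x := by
  rcases lt_trichotomy x 0 with h | h | h
  · rw [Real.sign_of_neg h, Real.sign_of_neg (by nlinarith)]
  · simp [h]
  · rw [Real.sign_of_pos h, Real.sign_of_pos (by nlinarith)]

/-- Along a continuous path `S t` in `GL(n,ℂ)` from `I` to `S`, the sign of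
`det [[A_t, conj B_t],[B_t, conj A_t]]` with `(A_t,B_t) = (S_t* A S_t, S_tᵀ B S_t)` is constant;
in particular `G`-congruence (with `|ζ| = 1`, `P` invertible) preserves the sign of this
determinant, hence ellipticity and hyperbolicity. -/
theorem sign_pairDet_congruence (n : ℕ) (A B S : Matrix (Fin n) (Fin n) ℂ) (hB : Bᵀ = B)
    (St : ℝ → Matrix (Fin n) (Fin n) ℂ) (hcont : Continuous St)
    (h0 : St 0 = 1) (h1 : St 1 = S) (hinv : ∀ t, IsUnit (St t).det) :
    (∀ t ∈ Set.Icc (0 : ℝ) 1,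
      Real.sign ((pairDet ((St t)ᴴ * A * St t) ((St t)ᵀ * B * St t)).re)
        = Real.sign ((pairDet A B).re)) ∧
    (∀ (ζ : ℂ) (P : Matrix (Fin n) (Fin n) ℂ), ‖ζ‖ = 1 → IsUnit P.det →
      ((0 < (pairDet A B).re ↔
          0 < (pairDet (ζ • (Pᴴ * A * P)) ((starRingEnd ℂ ζ) • (Pᵀ * B * P))).re) ∧
       ((pairDet A B).re < 0 ↔
          (pairDet (ζ • (Pᴴ * A * P)) ((starRingEnd ℂ ζ) • (Pᵀ * B * P))).re < 0))) := by
  constructor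
  · intro t _
    have hc : 0 < (Complex.normSq (St t).det) ^ 2 := by
      exact pow_pos (Complex.normSq_pos.mpr (hinv t).ne_zero) 2
    rw [pairDet_congr,
      show ((Complex.normSq (St t).det : ℂ))^2 = (((Complex.normSq (St t).det)^2 : ℝ) : ℂ) by
        push_cast; ring,
      Complex.re_ofReal_mul]
    exact sign_pos_mul _ _ hc
  · intro ζ P hζ hP
    have hζ' : (Complex.normSq ζ : ℂ) = 1 := by
      rw [← Complex.sq_norm, hζ]; norm_num
    have hc : 0 < (Complex.normSq P.det) ^ 2 := by
      exact pow_pos (Complex.normSq_pos.mpr hP.ne_zero) 2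
    rw [pairDet_smul, hζ', one_pow, one_mul, pairDet_congr,
      show ((Complex.normSq P.det : ℂ))^2 = (((Complex.normSq P.det)^2 : ℝ) : ℂ) by
        push_cast; ring,
      Complex.re_ofReal_mul]
    constructor
    · constructor <;> intro h
      · positivity
      · nlinarith
    · constructor <;> intro h <;> nlinarith
end

section
/- The function f(z,w) = (1 + |z|²)·|w − (1/2)(z̄₁² + z̄₂² + ⋯ + z̄ₙ²)|² on ℂⁿ × ℂ is plurisubharmonic in a neighborhood U of the origin, strictly plurisubharmonic on U \ Y where Y = {w = (1/2)(z̄₁² + ⋯ + z̄ₙ²)}, and its complex Hessian restricted to TY/T^ℂY is strictly positive. -/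
open Complex

/-- The Levi form of a real-valued function `f` on a complex normed space, at `p`,
evaluated on the vector `v`:  `L_f(p)(v) = (1/4)(D²f(p)(v,v) + D²f(p)(iv,iv))`. -/
noncomputable def leviForm {E : Type*} [NormedAddCommGroup E] [NormedSpace ℂ E]
    (f : E → ℝ) (p v : E) : ℝ :=
  (1 / 4) * (iteratedFDeriv ℝ 2 f p ![v, v]
    + iteratedFDeriv ℝ 2 f p ![Complex.I • v, Complex.I • v])

/-- `ψ(z,w) = w − (1/2)(z̄₁² + ⋯ + z̄ₙ²)`; the submanifold `Y` is `{ψ = 0}`. -/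
noncomputable def psiF (n : ℕ) (p : (Fin n → ℂ) × ℂ) : ℂ :=
  p.2 - (1 / 2) * ∑ k, (starRingEnd ℂ (p.1 k)) ^ 2

/-- `f(z,w) = (1 + |z|²)·|w − (1/2)(z̄₁² + ⋯ + z̄ₙ²)|²`. -/
noncomputable def fF (n : ℕ) (p : (Fin n → ℂ) × ℂ) : ℝ :=
  (1 + ∑ k, Complex.normSq (p.1 k)) * Complex.normSq (psiF n p)

section aux
open ContinuousLinearMap

noncomputable def dNormSq (a : ℂ) : ℂ →L[ℝ] ℝ :=
  (2*a.re) • Complex.reCLM + (2*a.im) • Complex.imCLM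

@[simp] lemma dNormSq_apply (a v : ℂ) : dNormSq a v = 2*a.re*v.re + 2*a.im*v.im := by
  simp [dNormSq]

lemma hasFDerivAt_normSq (a : ℂ) : HasFDerivAt Complex.normSq (dNormSq a) a := by
  have h : HasFDerivAt (fun z : ℂ => z.re*z.re + z.im*z.im)
      ((a.re • Complex.reCLM + a.re • Complex.reCLM) +
       (a.im • Complex.imCLM + a.im • Complex.imCLM)) a :=
    ((Complex.reCLM.hasFDerivAt.mul Complex.reCLM.hasFDerivAt).add
      (Complex.imCLM.hasFDerivAt.mul Complex.imCLM.hasFDerivAt))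
  have e : (fun z : ℂ => z.re*z.re + z.im*z.im) = Complex.normSq := by
    funext z; simp [Complex.normSq_apply]
  rw [e] at h
  refine h.congr_fderiv ?_
  ext v
  · simp [dNormSq]; ring

noncomputable def conjL : ℂ →L[ℝ] ℂ := Complex.conjCLE.toContinuousLinearMap
@[simp] lemma conjL_apply (z : ℂ) : conjL z = starRingEnd ℂ z := rfl

noncomputable def evalk (n : ℕ) (k : Fin n) : ((Fin n → ℂ) × ℂ) →L[ℝ] ℂ :=
  (ContinuousLinearMap.proj k).comp (ContinuousLinearMap.fst ℝ (Fin n → ℂ) ℂ)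
@[simp] lemma evalk_apply (n : ℕ) (k : Fin n) (v : (Fin n → ℂ) × ℂ) : evalk n k v = v.1 k := rfl

noncomputable def dPsi (n : ℕ) (p : (Fin n → ℂ) × ℂ) : ((Fin n → ℂ) × ℂ) →L[ℝ] ℂ :=
  (ContinuousLinearMap.snd ℝ (Fin n → ℂ) ℂ) -
    ∑ k, (starRingEnd ℂ (p.1 k)) • ((conjL).comp (evalk n k))

@[simp] lemma dPsi_apply (n : ℕ) (p v : (Fin n → ℂ) × ℂ) :
    dPsi n p v = v.2 - ∑ k, starRingEnd ℂ (p.1 k) * starRingEnd ℂ (v.1 k) := by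
  simp [dPsi]

lemma hasFDerivAt_conj_eval (n : ℕ) (k : Fin n) (p : (Fin n → ℂ) × ℂ) :
    HasFDerivAt (fun q : (Fin n → ℂ) × ℂ => starRingEnd ℂ (q.1 k))
      ((conjL).comp (evalk n k)) p :=
  ((conjL).comp (evalk n k)).hasFDerivAt

lemma hasFDerivAt_psi (n : ℕ) (p : (Fin n → ℂ) × ℂ) : HasFDerivAt (psiF n) (dPsi n p) p := by
  have hk : ∀ k : Fin n, HasFDerivAt (fun q : (Fin n → ℂ) × ℂ => (starRingEnd ℂ (q.1 k))^2)
      ((starRingEnd ℂ (p.1 k)) • ((conjL).comp (evalk n k))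
        + (starRingEnd ℂ (p.1 k)) • ((conjL).comp (evalk n k))) p := by
    intro k
    have := (hasFDerivAt_conj_eval n k p).fun_mul (hasFDerivAt_conj_eval n k p)
    simpa [sq] using this
  have hsum := HasFDerivAt.fun_sum (fun k (_ : k ∈ Finset.univ) => hk k)
  have h2 : HasFDerivAt (fun q : (Fin n → ℂ) × ℂ => q.2)
      (ContinuousLinearMap.snd ℝ (Fin n → ℂ) ℂ) p := hasFDerivAt_snd
  have h := h2.fun_sub (hsum.const_mul ((1:ℂ)/2))
  refine h.congr_fderiv ?_
  unfold dPsi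
  congr 1
  rw [Finset.smul_sum]
  refine Finset.sum_congr rfl fun k _ => ?_
  rw [← two_smul ℂ, smul_smul]
  norm_num

@[simp] lemma fderiv_psi (n : ℕ) (p : (Fin n → ℂ) × ℂ) :
    fderiv ℝ (psiF n) p = dPsi n p := (hasFDerivAt_psi n p).fderiv

noncomputable def dG (n : ℕ) (p : (Fin n → ℂ) × ℂ) : ((Fin n → ℂ) × ℂ) →L[ℝ] ℝ :=
  ∑ k, (dNormSq (p.1 k)).comp (evalk n k)

lemma hasFDerivAt_G (n : ℕ) (p : (Fin n → ℂ) × ℂ) :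
    HasFDerivAt (fun q : (Fin n → ℂ) × ℂ => 1 + ∑ k, Complex.normSq (q.1 k)) (dG n p) p := by
  have hk : ∀ k : Fin n, HasFDerivAt (fun q : (Fin n → ℂ) × ℂ => Complex.normSq (q.1 k))
      ((dNormSq (p.1 k)).comp (evalk n k)) p :=
    fun k => (hasFDerivAt_normSq (p.1 k)).comp p ((evalk n k).hasFDerivAt)
  exact (HasFDerivAt.fun_sum (fun k (_ : k ∈ Finset.univ) => hk k)).const_add 1

noncomputable def dF (n : ℕ) (p : (Fin n → ℂ) × ℂ) : ((Fin n → ℂ) × ℂ) →L[ℝ] ℝ :=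
  (1 + ∑ k, Complex.normSq (p.1 k)) • ((dNormSq (psiF n p)).comp (dPsi n p))
    + (Complex.normSq (psiF n p)) • dG n p

lemma hasFDerivAt_fF (n : ℕ) (p : (Fin n → ℂ) × ℂ) : HasFDerivAt (fF n) (dF n p) p := by
  have hN : HasFDerivAt (fun q : (Fin n → ℂ) × ℂ => Complex.normSq (psiF n q))
      ((dNormSq (psiF n p)).comp (dPsi n p)) p :=
    (hasFDerivAt_normSq (psiF n p)).comp p (hasFDerivAt_psi n p)
  exact (hasFDerivAt_G n p).mul hN

@[simp] lemma fderiv_fF (n : ℕ) (p : (Fin n → ℂ) × ℂ) :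
    fderiv ℝ (fF n) p = dF n p := (hasFDerivAt_fF n p).fderiv

lemma dF_apply (n : ℕ) (q v : (Fin n → ℂ) × ℂ) :
    dF n q v = (1 + ∑ k, Complex.normSq (q.1 k))
        * (2 * ((starRingEnd ℂ) (psiF n q) * (dPsi n q v)).re)
      + Complex.normSq (psiF n q) * (2 * (∑ k, (starRingEnd ℂ) (q.1 k) * v.1 k).re) := by
  simp only [dF, ContinuousLinearMap.add_apply, ContinuousLinearMap.smul_apply,
    ContinuousLinearMap.comp_apply, dG, ContinuousLinearMap.sum_apply, dNormSq_apply,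
    smul_eq_mul, evalk_apply]
  have hX : ∀ x : ℂ, 2 * ((starRingEnd ℂ) (psiF n q) * x).re
      = 2*(psiF n q).re*x.re + 2*(psiF n q).im*x.im := fun x => by
    rw [Complex.mul_re, Complex.conj_re, Complex.conj_im]; ring
  have hS : 2 * (∑ k, (starRingEnd ℂ) (q.1 k) * v.1 k).re
      = ∑ k, (2*(q.1 k).re*(v.1 k).re + 2*(q.1 k).im*(v.1 k).im) := by
    rw [Complex.re_sum, Finset.mul_sum]
    exact Finset.sum_congr rfl fun k _ => by
      rw [Complex.mul_re, Complex.conj_re, Complex.conj_im]; ring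
  rw [hX, hS]

noncomputable def dPhi (n : ℕ) (p v : (Fin n → ℂ) × ℂ) : ((Fin n → ℂ) × ℂ) →L[ℝ] ℝ :=
  ((1 + ∑ k, Complex.normSq (p.1 k)) •
      ((2:ℝ) • (Complex.reCLM.comp
        ((starRingEnd ℂ) (psiF n p) • (-(∑ k, (starRingEnd ℂ) (v.1 k) • (conjL.comp (evalk n k))))
          + (dPsi n p v) • (conjL.comp (dPsi n p)))))
    + (2 * Complex.reCLM ((starRingEnd ℂ) (psiF n p) * dPsi n p v)) • dG n p)
  + (Complex.normSq (psiF n p) •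
      ((2:ℝ) • (Complex.reCLM.comp (∑ k, (v.1 k) • (conjL.comp (evalk n k)))))
    + (2 * Complex.reCLM (∑ k, (starRingEnd ℂ) (p.1 k) * v.1 k)) •
        ((dNormSq (psiF n p)).comp (dPsi n p)))

lemma hasFDerivAt_Phi (n : ℕ) (p v : (Fin n → ℂ) × ℂ) :
    HasFDerivAt (fun q : (Fin n → ℂ) × ℂ =>
        (1 + ∑ k, Complex.normSq (q.1 k))
          * (2 * ((starRingEnd ℂ) (psiF n q) * (dPsi n q v)).re)
        + Complex.normSq (psiF n q) * (2 * (∑ k, (starRingEnd ℂ) (q.1 k) * v.1 k).re))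
      (dPhi n p v) p := by
  have hψ := hasFDerivAt_psi n p
  have hconjψ : HasFDerivAt (fun q : (Fin n → ℂ) × ℂ => (starRingEnd ℂ) (psiF n q))
      (conjL.comp (dPsi n p)) p := conjL.hasFDerivAt.comp p hψ
  have hDv : HasFDerivAt (fun q : (Fin n → ℂ) × ℂ => dPsi n q v)
      (-(∑ k, (starRingEnd ℂ (v.1 k)) • (conjL.comp (evalk n k)))) p := by
    have e : (fun q : (Fin n → ℂ) × ℂ => dPsi n q v)
        = fun q => v.2 - ∑ k, starRingEnd ℂ (q.1 k) * starRingEnd ℂ (v.1 k) :=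
      funext fun q => dPsi_apply n q v
    rw [e]
    exact (HasFDerivAt.fun_sum (fun k (_ : k ∈ Finset.univ) =>
      (hasFDerivAt_conj_eval n k p).mul_const (starRingEnd ℂ (v.1 k)))).const_sub v.2
  have hm := hconjψ.mul hDv
  have hre2 := (Complex.reCLM.hasFDerivAt.comp p hm).const_mul (2:ℝ)
  have hGp := hasFDerivAt_G n p
  have hA0 := HasFDerivAt.fun_sum (fun (k : Fin n) (_ : k ∈ Finset.univ) =>
    (hasFDerivAt_conj_eval n k p).mul_const (v.1 k))
  have hA := (Complex.reCLM.hasFDerivAt.comp p hA0).const_mul (2:ℝ)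
  have hNq := (hasFDerivAt_normSq (psiF n p)).comp p hψ
  exact (hGp.mul hre2).add (hNq.mul hA)

lemma dNormSq_eq (a u : ℂ) : dNormSq a u = 2 * ((starRingEnd ℂ) a * u).re := by
  rw [dNormSq_apply, Complex.mul_re, Complex.conj_re, Complex.conj_im]; ring

lemma dG_apply (n : ℕ) (p u : (Fin n → ℂ) × ℂ) :
    dG n p u = 2 * (∑ k, (starRingEnd ℂ) (p.1 k) * u.1 k).re := by
  simp only [dG, ContinuousLinearMap.sum_apply, ContinuousLinearMap.comp_apply, evalk_apply,
    dNormSq_apply]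
  rw [Complex.re_sum, Finset.mul_sum]
  exact (Finset.sum_congr rfl fun k _ => by
    rw [Complex.mul_re, Complex.conj_re, Complex.conj_im]; ring).symm

lemma dPhi_apply (n : ℕ) (p v u : (Fin n → ℂ) × ℂ) :
    dPhi n p v u =
      (1 + ∑ k, Complex.normSq (p.1 k)) *
        (2 * ((starRingEnd ℂ) (psiF n p) * (-(∑ k, (starRingEnd ℂ) (v.1 k) * (starRingEnd ℂ) (u.1 k)))
            + dPsi n p v * (starRingEnd ℂ) (dPsi n p u)).re)
      + (2 * ((starRingEnd ℂ) (psiF n p) * dPsi n p v).re)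
          * (2 * (∑ k, (starRingEnd ℂ) (p.1 k) * u.1 k).re)
      + (Complex.normSq (psiF n p) * (2 * (∑ k, v.1 k * (starRingEnd ℂ) (u.1 k)).re)
      + (2 * (∑ k, (starRingEnd ℂ) (p.1 k) * v.1 k).re)
          * (2 * ((starRingEnd ℂ) (psiF n p) * dPsi n p u).re)) := by
  simp only [dPhi, ContinuousLinearMap.add_apply, ContinuousLinearMap.smul_apply,
    ContinuousLinearMap.comp_apply, ContinuousLinearMap.neg_apply,
    ContinuousLinearMap.sum_apply, conjL_apply, evalk_apply, Complex.reCLM_apply,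
    smul_eq_mul, dG_apply, dNormSq_eq]

lemma contDiff_normSq : ContDiff ℝ ⊤ Complex.normSq := by
  have e : Complex.normSq = fun z : ℂ => z.re*z.re + z.im*z.im := by
    funext z; simp [Complex.normSq_apply]
  rw [e]
  exact (Complex.reCLM.contDiff.mul Complex.reCLM.contDiff).add
    (Complex.imCLM.contDiff.mul Complex.imCLM.contDiff)

lemma contDiff_psi (n : ℕ) : ContDiff ℝ ⊤ (psiF n) := by
  unfold psiF
  refine ContDiff.sub contDiff_snd (ContDiff.mul contDiff_const (ContDiff.sum fun k _ => ?_))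
  exact ((conjL.comp (evalk n k)).contDiff).pow 2

lemma contDiff_fF (n : ℕ) : ContDiff ℝ ⊤ (fF n) := by
  unfold fF
  exact ((contDiff_const.add (ContDiff.sum fun k _ =>
      contDiff_normSq.comp (evalk n k).contDiff)).mul
    (contDiff_normSq.comp (contDiff_psi n)))

lemma fderiv_fderiv_apply (n : ℕ) (p u v : (Fin n → ℂ) × ℂ) :
    fderiv ℝ (fderiv ℝ (fF n)) p u v = dPhi n p v u := by
  have hd : DifferentiableAt ℝ (fderiv ℝ (fF n)) p :=
    (((contDiff_fF n).fderiv_right (m := 1) (le_top)).differentiable one_ne_zero) p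
  have h1 : fderiv ℝ (fun q => fderiv ℝ (fF n) q v) p
      = (fderiv ℝ (fderiv ℝ (fF n)) p).flip v := by
    rw [fderiv_clm_apply hd (differentiableAt_const v)]
    simp
  have e2 : (fun q => fderiv ℝ (fF n) q v) = (fun q : (Fin n → ℂ) × ℂ =>
      (1 + ∑ k, Complex.normSq (q.1 k))
        * (2 * ((starRingEnd ℂ) (psiF n q) * (dPsi n q v)).re)
      + Complex.normSq (psiF n q) * (2 * (∑ k, (starRingEnd ℂ) (q.1 k) * v.1 k).re)) :=
    funext fun q => by rw [fderiv_fF]; exact dF_apply n q v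
  have h2 : fderiv ℝ (fun q => fderiv ℝ (fF n) q v) p = dPhi n p v := by
    rw [e2]; exact (hasFDerivAt_Phi n p v).fderiv
  have h3 := h1.symm.trans h2
  calc fderiv ℝ (fderiv ℝ (fF n)) p u v
      = (fderiv ℝ (fderiv ℝ (fF n)) p).flip v u := (ContinuousLinearMap.flip_apply _ _ _).symm
    _ = dPhi n p v u := by rw [h3]

lemma levi_repr (n : ℕ) (p v : (Fin n → ℂ) × ℂ) :
    leviForm (fF n) p v = (1/4) * (dPhi n p v v + dPhi n p (Complex.I • v) (Complex.I • v)) := by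
  unfold leviForm
  rw [iteratedFDeriv_two_apply, iteratedFDeriv_two_apply]
  simp only [Matrix.cons_val_zero, Matrix.cons_val_one, Matrix.head_cons]
  rw [fderiv_fderiv_apply, fderiv_fderiv_apply]

lemma sum_smul_smul (n : ℕ) (c d : ℂ) (f g : Fin n → ℂ) :
    ∑ k, (c * f k) * (d * g k) = (c*d) * ∑ k, f k * g k := by
  rw [Finset.mul_sum]; exact Finset.sum_congr rfl fun k _ => by ring

lemma sum_mul_smul (n : ℕ) (c : ℂ) (f g : Fin n → ℂ) :
    ∑ k, f k * (c * g k) = c * ∑ k, f k * g k := by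
  rw [Finset.mul_sum]; exact Finset.sum_congr rfl fun k _ => by ring

lemma sum_conj_mul_conj (n : ℕ) (f g : Fin n → ℂ) :
    ∑ k, (starRingEnd ℂ) (f k) * (starRingEnd ℂ) (g k) = (starRingEnd ℂ) (∑ k, f k * g k) := by
  rw [map_sum]; exact Finset.sum_congr rfl fun k _ => (map_mul _ _ _).symm

lemma sum_mul_conj_self (n : ℕ) (f : Fin n → ℂ) :
    ∑ k, f k * (starRingEnd ℂ) (f k) = ((∑ k, Complex.normSq (f k) : ℝ) : ℂ) := by
  rw [Complex.ofReal_sum]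
  exact Finset.sum_congr rfl fun k _ => Complex.mul_conj (f k)

lemma levi_clean (n : ℕ) (p v : (Fin n → ℂ) × ℂ) :
    leviForm (fF n) p v =
      Complex.normSq (psiF n p) * (∑ k, Complex.normSq (v.1 k))
      + (1 + ∑ k, Complex.normSq (p.1 k)) *
          (Complex.normSq v.2 + Complex.normSq (∑ k, p.1 k * v.1 k))
      + 2 * ((∑ k, (starRingEnd ℂ) (p.1 k) * v.1 k) * psiF n p * (starRingEnd ℂ) v.2).re
      - 2 * ((∑ k, (starRingEnd ℂ) (p.1 k) * v.1 k) * (starRingEnd ℂ) (psiF n p)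
            * (starRingEnd ℂ) (∑ k, p.1 k * v.1 k)).re := by
  rw [levi_repr, dPhi_apply, dPhi_apply]
  simp only [dPsi_apply, Prod.smul_fst, Prod.smul_snd, Pi.smul_apply, smul_eq_mul, map_mul,
    Complex.conj_I]
  simp only [sum_smul_smul, sum_mul_smul, sum_conj_mul_conj, sum_mul_conj_self]
  simp only [Complex.mul_re, Complex.mul_im, Complex.add_re, Complex.add_im, Complex.sub_re,
    Complex.sub_im, Complex.neg_re, Complex.neg_im, Complex.I_re, Complex.I_im,
    Complex.conj_re, Complex.conj_im, Complex.ofReal_re, Complex.ofReal_im,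
    Complex.normSq_apply]
  ring

lemma re_sq_le_normSq (z : ℂ) : z.re^2 ≤ Complex.normSq z := by
  rw [Complex.normSq_apply]; nlinarith [sq_nonneg z.im]

lemma abs_le_half {c P Y : ℝ} (hP : 0 ≤ P) (hY : 0 ≤ Y) (h : c^2 ≤ P*Y) : |c| ≤ (P+Y)/2 := by
  have h2 : c^2 ≤ ((P+Y)/2)^2 := by nlinarith [sq_nonneg (P-Y)]
  calc |c| = Real.sqrt (c^2) := (Real.sqrt_sq_eq_abs c).symm
    _ ≤ Real.sqrt (((P+Y)/2)^2) := Real.sqrt_le_sqrt h2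
    _ = (P+Y)/2 := Real.sqrt_sq (by positivity)

lemma normSq_sum_mul_le (n : ℕ) (f g : Fin n → ℂ) :
    Complex.normSq (∑ k, f k * g k)
      ≤ (∑ k, Complex.normSq (f k)) * (∑ k, Complex.normSq (g k)) := by
  have h1 : ‖∑ k, f k * g k‖ ≤ ∑ k, ‖f k‖ * ‖g k‖ := by
    refine le_trans (norm_sum_le _ _) ?_
    exact le_of_eq (Finset.sum_congr rfl fun k _ => norm_mul _ _)
  have h2 : (∑ k, ‖f k‖ * ‖g k‖)^2
      ≤ (∑ k, ‖f k‖^2) * (∑ k, ‖g k‖^2) :=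
    Finset.sum_mul_sq_le_sq_mul_sq _ _ _
  have h3 : Complex.normSq (∑ k, f k * g k) = ‖∑ k, f k * g k‖^2 :=
    (Complex.sq_norm _).symm
  have h4 : ‖∑ k, f k * g k‖^2
      ≤ (∑ k, ‖f k‖ * ‖g k‖)^2 := by
    nlinarith [norm_nonneg (∑ k, f k * g k),
      Finset.sum_nonneg (fun (k : Fin n) (_ : k ∈ Finset.univ) =>
        mul_nonneg (norm_nonneg (f k)) (norm_nonneg (g k)))]
  have h5 : (∑ k, ‖f k‖^2) = ∑ k, Complex.normSq (f k) :=
    Finset.sum_congr rfl fun k _ => Complex.sq_norm _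
  have h6 : (∑ k, ‖g k‖^2) = ∑ k, Complex.normSq (g k) :=
    Finset.sum_congr rfl fun k _ => Complex.sq_norm _
  rw [h3, ← h5, ← h6]
  exact h4.trans h2

lemma cross_bounds (n : ℕ) (p v : (Fin n → ℂ) × ℂ)
    (hS : (∑ k, Complex.normSq (p.1 k)) ≤ 1/4) :
    |2 * ((∑ k, (starRingEnd ℂ) (p.1 k) * v.1 k) * psiF n p * (starRingEnd ℂ) v.2).re|
        ≤ ((∑ k, Complex.normSq (v.1 k)) * Complex.normSq (psiF n p) + Complex.normSq v.2)/2
    ∧ |2 * ((∑ k, (starRingEnd ℂ) (p.1 k) * v.1 k) * (starRingEnd ℂ) (psiF n p)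
          * (starRingEnd ℂ) (∑ k, p.1 k * v.1 k)).re|
        ≤ ((∑ k, Complex.normSq (v.1 k)) * Complex.normSq (psiF n p)
            + Complex.normSq (∑ k, p.1 k * v.1 k))/2 := by
  set S := ∑ k, Complex.normSq (p.1 k) with hSdef
  set s1 := ∑ k, Complex.normSq (v.1 k) with hs1def
  set A := ∑ k, (starRingEnd ℂ) (p.1 k) * v.1 k with hAdef
  set B := ∑ k, p.1 k * v.1 k with hBdef
  set Ψ := psiF n p with hΨdef
  have hs1 : 0 ≤ s1 := Finset.sum_nonneg fun k _ => Complex.normSq_nonneg _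
  have hN : 0 ≤ Complex.normSq Ψ := Complex.normSq_nonneg _
  have hY2 : 0 ≤ Complex.normSq v.2 := Complex.normSq_nonneg _
  have hZ2 : 0 ≤ Complex.normSq B := Complex.normSq_nonneg _
  have hA : Complex.normSq A ≤ S * s1 := by
    have h := normSq_sum_mul_le n (fun k => (starRingEnd ℂ) (p.1 k)) v.1
    simpa [Complex.normSq_conj] using h
  have key : ∀ x : ℂ, Complex.normSq x ≤ Complex.normSq Ψ *
      Complex.normSq x → True := fun _ _ => trivial
  constructor
  · have h1 : ((A * Ψ * (starRingEnd ℂ) v.2).re)^2 ≤ Complex.normSq (A * Ψ * (starRingEnd ℂ) v.2) :=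
      re_sq_le_normSq _
    have h2 : Complex.normSq (A * Ψ * (starRingEnd ℂ) v.2)
        = Complex.normSq A * Complex.normSq Ψ * Complex.normSq v.2 := by
      simp [Complex.normSq_mul, Complex.normSq_conj]
    have h3 : Complex.normSq A * (Complex.normSq Ψ * Complex.normSq v.2)
        ≤ (S * s1) * (Complex.normSq Ψ * Complex.normSq v.2) :=
      mul_le_mul_of_nonneg_right hA (mul_nonneg hN hY2)
    have hc1 : (2 * (A * Ψ * (starRingEnd ℂ) v.2).re)^2
        ≤ (s1 * Complex.normSq Ψ) * Complex.normSq v.2 := by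
      nlinarith [mul_nonneg (mul_nonneg hs1 hN) hY2, mul_nonneg hN hY2, hs1, hN, hY2]
    exact abs_le_half (mul_nonneg hs1 hN) hY2 hc1
  · have h1 : ((A * (starRingEnd ℂ) Ψ * (starRingEnd ℂ) B).re)^2
        ≤ Complex.normSq (A * (starRingEnd ℂ) Ψ * (starRingEnd ℂ) B) := re_sq_le_normSq _
    have h2 : Complex.normSq (A * (starRingEnd ℂ) Ψ * (starRingEnd ℂ) B)
        = Complex.normSq A * Complex.normSq Ψ * Complex.normSq B := by
      simp [Complex.normSq_mul, Complex.normSq_conj]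
    have h3 : Complex.normSq A * (Complex.normSq Ψ * Complex.normSq B)
        ≤ (S * s1) * (Complex.normSq Ψ * Complex.normSq B) :=
      mul_le_mul_of_nonneg_right hA (mul_nonneg hN hZ2)
    have hc2 : (2 * (A * (starRingEnd ℂ) Ψ * (starRingEnd ℂ) B).re)^2
        ≤ (s1 * Complex.normSq Ψ) * Complex.normSq B := by
      nlinarith [mul_nonneg (mul_nonneg hs1 hN) hZ2, mul_nonneg hN hZ2, hs1, hN, hZ2]
    exact abs_le_half (mul_nonneg hs1 hN) hZ2 hc2

lemma claim1 (n : ℕ) (p v : (Fin n → ℂ) × ℂ)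
    (hS : (∑ k, Complex.normSq (p.1 k)) ≤ 1/4) : 0 ≤ leviForm (fF n) p v := by
  obtain ⟨b1, b2⟩ := cross_bounds n p v hS
  rw [levi_clean]
  have hS0 : 0 ≤ ∑ k, Complex.normSq (p.1 k) :=
    Finset.sum_nonneg fun k _ => Complex.normSq_nonneg _
  have hs1 : 0 ≤ ∑ k, Complex.normSq (v.1 k) :=
    Finset.sum_nonneg fun k _ => Complex.normSq_nonneg _
  have hN : 0 ≤ Complex.normSq (psiF n p) := Complex.normSq_nonneg _
  have hY2 : 0 ≤ Complex.normSq v.2 := Complex.normSq_nonneg _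
  have hZ2 : 0 ≤ Complex.normSq (∑ k, p.1 k * v.1 k) := Complex.normSq_nonneg _
  obtain ⟨b1l, b1r⟩ := abs_le.mp b1
  obtain ⟨b2l, b2r⟩ := abs_le.mp b2
  nlinarith [mul_nonneg hS0 (add_nonneg hY2 hZ2), mul_nonneg hN hs1]

lemma claim2 (n : ℕ) (p v : (Fin n → ℂ) × ℂ)
    (hS : (∑ k, Complex.normSq (p.1 k)) ≤ 1/4) (hψ : psiF n p ≠ 0) (hv : v ≠ 0) :
    0 < leviForm (fF n) p v := by
  have hS0 : 0 ≤ ∑ k, Complex.normSq (p.1 k) :=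
    Finset.sum_nonneg fun k _ => Complex.normSq_nonneg _
  have hN : 0 < Complex.normSq (psiF n p) := Complex.normSq_pos.mpr hψ
  by_cases hv1 : v.1 = 0
  · have hv2 : v.2 ≠ 0 := by
      intro h0
      exact hv (Prod.ext_iff.mpr ⟨by simpa using hv1, by simpa using h0⟩)
    have hY2 : 0 < Complex.normSq v.2 := Complex.normSq_pos.mpr hv2
    rw [levi_clean]
    simp only [hv1, Pi.zero_apply, mul_zero, Finset.sum_const_zero, map_zero, zero_mul,
      Complex.normSq_zero, add_zero, Complex.zero_re, sub_zero, mul_zero]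
    nlinarith
  · obtain ⟨k0, hk0⟩ := Function.ne_iff.mp hv1
    have hs1 : 0 < ∑ k, Complex.normSq (v.1 k) :=
      Finset.sum_pos' (fun k _ => Complex.normSq_nonneg _)
        ⟨k0, Finset.mem_univ _, Complex.normSq_pos.mpr hk0⟩
    obtain ⟨b1, b2⟩ := cross_bounds n p v hS
    rw [levi_clean]
    have hY2 : 0 ≤ Complex.normSq v.2 := Complex.normSq_nonneg _
    have hZ2 : 0 ≤ Complex.normSq (∑ k, p.1 k * v.1 k) := Complex.normSq_nonneg _
    have hP : 0 < (∑ k, Complex.normSq (v.1 k)) * Complex.normSq (psiF n p) :=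
      mul_pos hs1 hN
    rcases eq_or_lt_of_le (add_nonneg hY2 hZ2) with hzero | hpos
    · have hY0 : Complex.normSq v.2 = 0 := by nlinarith
      have hZ0 : Complex.normSq (∑ k, p.1 k * v.1 k) = 0 := by nlinarith
      have hb1 : |2 * ((∑ k, (starRingEnd ℂ) (p.1 k) * v.1 k) * psiF n p
          * (starRingEnd ℂ) v.2).re| = 0 := by
        have : (starRingEnd ℂ) v.2 = 0 := by
          rw [show v.2 = 0 from Complex.normSq_eq_zero.mp hY0]; simp
        simp [this]
      have hb2 : |2 * ((∑ k, (starRingEnd ℂ) (p.1 k) * v.1 k) * (starRingEnd ℂ) (psiF n p)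
          * (starRingEnd ℂ) (∑ k, p.1 k * v.1 k)).re| = 0 := by
        have : (starRingEnd ℂ) (∑ k, p.1 k * v.1 k) = 0 := by
          rw [show (∑ k, p.1 k * v.1 k) = 0 from Complex.normSq_eq_zero.mp hZ0]; simp
        simp [this]
      rw [abs_eq_zero] at hb1 hb2
      rw [hb1, hb2, hY0, hZ0]
      nlinarith
    · obtain ⟨b1l, b1r⟩ := abs_le.mp b1
      obtain ⟨b2l, b2r⟩ := abs_le.mp b2
      nlinarith [mul_nonneg hS0 (add_nonneg hY2 hZ2)]

lemma claim3 (n : ℕ) (p v : (Fin n → ℂ) × ℂ) (hψ : psiF n p = 0)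
    (h1 : fderiv ℝ (psiF n) p v = 0)
    (h2 : fderiv ℝ (psiF n) p (Complex.I • v) ≠ 0) :
    0 < leviForm (fF n) p v := by
  rw [fderiv_psi, dPsi_apply, sub_eq_zero] at h1
  have hv2 : v.2 ≠ 0 := by
    intro h0
    apply h2
    rw [fderiv_psi, dPsi_apply]
    simp only [Prod.smul_snd, Prod.smul_fst, Pi.smul_apply, smul_eq_mul, map_mul,
      Complex.conj_I]
    rw [sum_mul_smul, ← h1, h0]
    ring
  have hS0 : 0 ≤ ∑ k, Complex.normSq (p.1 k) :=
    Finset.sum_nonneg fun k _ => Complex.normSq_nonneg _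
  have hY2 : 0 < Complex.normSq v.2 := Complex.normSq_pos.mpr hv2
  have hZ2 : 0 ≤ Complex.normSq (∑ k, p.1 k * v.1 k) := Complex.normSq_nonneg _
  rw [levi_clean, hψ]
  simp only [Complex.normSq_zero, zero_mul, map_zero, mul_zero, Complex.zero_re, sub_zero,
    add_zero, zero_add]
  nlinarith

end aux

/-- `f` is plurisubharmonic near `0`, strictly plurisubharmonic off `Y = {ψ = 0}`, and its
Levi form is strictly positive on tangent vectors to `Y` not lying in the complex tangent
space `T^ℂY = TY ∩ J(TY)`. -/
theorem psh_near_hyperbolic_point (n : ℕ) :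
    ∃ U : Set ((Fin n → ℂ) × ℂ), U ∈ nhds (0 : (Fin n → ℂ) × ℂ) ∧
      (∀ p ∈ U, ∀ v, 0 ≤ leviForm (fF n) p v) ∧
      (∀ p ∈ U, psiF n p ≠ 0 → ∀ v, v ≠ 0 → 0 < leviForm (fF n) p v) ∧
      (∀ p ∈ U, psiF n p = 0 → ∀ v, fderiv ℝ (psiF n) p v = 0 →
        fderiv ℝ (psiF n) p (Complex.I • v) ≠ 0 → 0 < leviForm (fF n) p v) := by
  classical
  refine ⟨{p : (Fin n → ℂ) × ℂ | (∑ k, Complex.normSq (p.1 k)) < 1/4}, ?_, ?_, ?_, ?_⟩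
  · have hcont : Continuous fun p : (Fin n → ℂ) × ℂ => ∑ k, Complex.normSq (p.1 k) :=
      continuous_finset_sum _ fun k _ =>
        Complex.continuous_normSq.comp ((continuous_apply k).comp continuous_fst)
    have hopen : IsOpen {p : (Fin n → ℂ) × ℂ | (∑ k, Complex.normSq (p.1 k)) < 1/4} :=
      isOpen_lt hcont continuous_const
    refine hopen.mem_nhds ?_
    simp
  · exact fun p hp v => claim1 n p v (le_of_lt hp)
  · exact fun p hp hψ v hv => claim2 n p v (le_of_lt hp) hψ hv
  · exact fun p hp hψ v h1 h2 => claim3 n p v hψ h1 h2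
end

section
/- For every complex symmetric n×n matrix B there exists an invertible complex matrix S such that Sᵀ B S is diagonal with nonnegative real entries; moreover if B is invertible, S can be chosen so that Sᵀ B S = I. -/
open Matrix

lemma takagi_aux (n : ℕ) (B : Matrix (Fin n) (Fin n) ℂ) (hB : Bᵀ = B) :
    ∃ S : Matrix (Fin n) (Fin n) ℂ, IsUnit S.det ∧
      ∃ D : Fin n → ℂ, Sᵀ * B * S = Matrix.diagonal D := by
  have hsym : ∀ i j, B j i = B i j := fun i j => congrFun (congrFun hB i) j
  set F := Matrix.toBilin' B with hF
  have hFsymm : F.IsSymm := by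
    rw [LinearMap.BilinForm.isSymm_def]
    intro x y
    simp only [F, Matrix.toBilin'_apply, RingHom.id_apply]
    rw [Finset.sum_comm]
    refine Finset.sum_congr rfl fun i _ => Finset.sum_congr rfl fun j _ => ?_
    rw [hsym i j]; ring
  obtain ⟨v, hv⟩ := LinearMap.BilinForm.exists_orthogonal_basis (LinearMap.BilinForm.isSymm_iff.1 hFsymm)
  let ec := finCongr (Module.finrank_fin_fun (R := ℂ) (n := n))
  let v' : Module.Basis (Fin n) ℂ (Fin n → ℂ) := v.reindex ec
  have hv' : ∀ i j, i ≠ j → F (v' i) (v' j) = 0 := by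
    intro i j hij
    have hne : ec.symm i ≠ ec.symm j := fun h => hij (by simpa using congrArg ec h)
    have := hv hne
    simpa [Function.onFun, LinearMap.IsOrtho, v', Module.Basis.reindex_apply] using this
  let e := Pi.basisFun ℂ (Fin n)
  refine ⟨e.toMatrix ⇑v', ?_, fun i => F (v' i) (v' i), ?_⟩
  · exact Matrix.isUnit_det_of_right_inverse (Module.Basis.toMatrix_mul_toMatrix_flip e v')
  · ext i j
    have hS : ∀ k l, e.toMatrix ⇑v' k l = v' l k := fun k l => by
      simp [e, Module.Basis.toMatrix_apply]
    have key : ((e.toMatrix ⇑v')ᵀ * B * (e.toMatrix ⇑v')) i j = F (v' i) (v' j) := by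
      simp only [F, Matrix.toBilin'_apply, Matrix.mul_apply, Matrix.transpose_apply, hS,
        Finset.sum_mul]
      try rw [Finset.sum_comm]
      try exact Finset.sum_congr rfl fun k _ => Finset.sum_congr rfl fun l _ => by ring
    rw [key]
    rcases eq_or_ne i j with rfl | hij
    · simp [Matrix.diagonal]
    · rw [hv' i j hij]
      simp [Matrix.diagonal_apply_ne _ hij]

lemma congr_diag_scale (n : ℕ) (B S : Matrix (Fin n) (Fin n) ℂ) (D c : Fin n → ℂ)
    (h : Sᵀ * B * S = Matrix.diagonal D) :
    (S * Matrix.diagonal c)ᵀ * B * (S * Matrix.diagonal c) =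
      Matrix.diagonal (fun i => c i * D i * c i) := by
  rw [Matrix.transpose_mul, Matrix.diagonal_transpose]
  calc Matrix.diagonal c * Sᵀ * B * (S * Matrix.diagonal c)
      = Matrix.diagonal c * (Sᵀ * B * S) * Matrix.diagonal c := by
        simp only [Matrix.mul_assoc]
    _ = _ := by
        rw [h, Matrix.diagonal_mul_diagonal, Matrix.diagonal_mul_diagonal]

lemma sqrt_sq (z : ℂ) (hz : z ≠ 0) : (z ^ ((2:ℂ)⁻¹)) ^ 2 = z := by
  have := Complex.cpow_nat_inv_pow z (two_ne_zero)
  rwa [show ((2:ℕ):ℂ) = (2:ℂ) by norm_num] at this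

/-- Takagi/Autonne factorization: every complex symmetric matrix is `ᵀ`-congruent to a
diagonal matrix with nonnegative real entries; an invertible complex symmetric matrix is
`ᵀ`-congruent to the identity. -/
theorem takagi_factorization (n : ℕ) (B : Matrix (Fin n) (Fin n) ℂ) (hB : Bᵀ = B) :
    (∃ S : Matrix (Fin n) (Fin n) ℂ, IsUnit S.det ∧
      ∃ d : Fin n → ℝ, (∀ i, 0 ≤ d i) ∧
        Sᵀ * B * S = Matrix.diagonal (fun i => (d i : ℂ))) ∧
    (IsUnit B.det →
      ∃ S : Matrix (Fin n) (Fin n) ℂ, IsUnit S.det ∧ Sᵀ * B * S = 1) := by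
  obtain ⟨S, hS, D, hSD⟩ := takagi_aux n B hB
  constructor
  · set c : Fin n → ℂ := fun i => if D i = 0 then 1 else (D i ^ ((2 : ℂ)⁻¹))⁻¹ with hc
    have hcnz : ∀ i, c i ≠ 0 := by
      intro i
      rw [hc]; dsimp only
      split_ifs with h
      · exact one_ne_zero
      · refine inv_ne_zero fun hz => h ?_
        rw [← sqrt_sq (D i) h, hz]; ring
    refine ⟨S * Matrix.diagonal c, ?_, fun i => if D i = 0 then 0 else 1, ?_, ?_⟩
    · rw [Matrix.det_mul, Matrix.det_diagonal]
      refine hS.mul (isUnit_iff_ne_zero.2 ?_)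
      rw [Finset.prod_ne_zero_iff]
      exact fun i _ => hcnz i
    · intro i; dsimp only; split_ifs <;> norm_num
    · rw [congr_diag_scale n B S D c hSD]
      have hfun : (fun i => c i * D i * c i) =
          fun i => (((if D i = 0 then 0 else 1 : ℝ)) : ℂ) := by
        funext i
        rw [hc]; dsimp only
        by_cases h : D i = 0
        · simp [h]
        · simp only [if_neg h, Complex.ofReal_one]
          have h2 := sqrt_sq (D i) h
          have hwnz : D i ^ ((2:ℂ)⁻¹) ≠ 0 := fun hz => h (by rw [← h2, hz]; ring)
          generalize hgen : D i ^ ((2:ℂ)⁻¹) = w at h2 hwnz ⊢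
          rw [← h2, sq]
          field_simp
      rw [hfun]
  · intro hBdet
    have hDdet : IsUnit (Matrix.diagonal D).det := by
      rw [← hSD, Matrix.det_mul, Matrix.det_mul, Matrix.det_transpose]
      exact (hS.mul hBdet).mul hS
    rw [Matrix.det_diagonal, isUnit_iff_ne_zero, Finset.prod_ne_zero_iff] at hDdet
    have hDnz : ∀ i, D i ≠ 0 := fun i => hDdet i (Finset.mem_univ i)
    set c : Fin n → ℂ := fun i => (D i ^ ((2 : ℂ)⁻¹))⁻¹ with hc
    have hwnz : ∀ i, D i ^ ((2:ℂ)⁻¹) ≠ 0 := fun i hz =>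
      hDnz i (by rw [← sqrt_sq (D i) (hDnz i), hz]; ring)
    refine ⟨S * Matrix.diagonal c, ?_, ?_⟩
    · rw [Matrix.det_mul, Matrix.det_diagonal]
      refine hS.mul (isUnit_iff_ne_zero.2 ?_)
      rw [Finset.prod_ne_zero_iff]
      exact fun i _ => inv_ne_zero (hwnz i)
    · rw [congr_diag_scale n B S D c hSD]
      have hfun : (fun i => c i * D i * c i) = fun _ => (1 : ℂ) := by
        funext i
        rw [hc]; dsimp only
        have h2 := sqrt_sq (D i) (hDnz i)
        have hwnz' := hwnz i
        generalize hgen : D i ^ ((2:ℂ)⁻¹) = w at h2 hwnz' ⊢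
        rw [← h2, sq]
        field_simp
      rw [hfun, Matrix.diagonal_one]
end
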